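/- Let A and B be Hilbert spaces continuously embedded in a common Hausdorff topological vector space. Then the algebraic sum A + B, equipped with the norm ‖u‖²_{A+B} = inf{ ‖u₁‖²_A + ‖u₂‖²_B : u = u₁ + u₂, u₁ ∈ A, u₂ ∈ B }, is a Hilbert space. -/

import Mathlib

/-- Let `A` and `B` be Hilbert spaces continuously embedded (via injective continuous linear
maps `iA`, `iB`) in a common Hausdorff topological vector space `E`.  Then the algebraic sum
`A + B` (the submodule `S = range iA ⊔ range iB` of `E`), equipped with the norm
`‖u‖² = inf { ‖a‖²_A + ‖b‖²_B : u = iA a + iB b }`, is a Hilbert space: it carries a complete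
inner-product space structure whose norm is the above sum norm. -/
theorem stmt4
    {E : Type*} [AddCommGroup E] [Module ℝ E] [TopologicalSpace E]
    [IsTopologicalAddGroup E] [ContinuousSMul ℝ E] [T2Space E]
    {A B : Type*}
    [NormedAddCommGroup A] [InnerProductSpace ℝ A] [CompleteSpace A]
    [NormedAddCommGroup B] [InnerProductSpace ℝ B] [CompleteSpace B]
    (iA : A →L[ℝ] E) (iB : B →L[ℝ] E)
    (hiA : Function.Injective iA) (hiB : Function.Injective iB)
    (S : Submodule ℝ E)
    (hS : S = LinearMap.range iA.toLinearMap ⊔ LinearMap.range iB.toLinearMap) :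
    ∃ (n : NormedAddCommGroup ↥S) (_ : @InnerProductSpace ℝ ↥S _ n.toSeminormedAddCommGroup),
      (∀ u : ↥S,
        ((n.toNorm.norm u : ℝ)) ^ 2 =
          sInf {r : ℝ | ∃ (a : A) (b : B), iA a + iB b = (u : E) ∧ r = ‖a‖ ^ 2 + ‖b‖ ^ 2}) ∧
      @CompleteSpace ↥S n.toMetricSpace.toPseudoMetricSpace.toUniformSpace := by
  classical
  let F := WithLp 2 (A × B)
  let φ : F →L[ℝ] E :=
    (iA.coprod iB).comp (WithLp.prodContinuousLinearEquiv 2 ℝ A B).toContinuousLinearMap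
  have hφ : ∀ x : F, φ x = iA x.fst + iB x.snd := fun x => rfl
  have hnormF : ∀ x : F, ‖x‖ ^ 2 = ‖x.fst‖ ^ 2 + ‖x.snd‖ ^ 2 := fun x =>
    WithLp.prod_norm_sq_eq_of_L2 x
  -- range of φ is S
  have hmem : ∀ u : E, u ∈ S ↔ ∃ x : F, φ x = u := by
    intro u
    rw [hS]
    constructor
    · intro hu
      rcases Submodule.mem_sup.mp hu with ⟨a, ⟨a', rfl⟩, b, ⟨b', rfl⟩, rfl⟩
      exact ⟨WithLp.toLp 2 (a', b'), rfl⟩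
    · rintro ⟨x, rfl⟩
      rw [hφ]
      exact Submodule.add_mem_sup (LinearMap.mem_range_self _ _) (LinearMap.mem_range_self _ _)
  set K : Submodule ℝ F := LinearMap.ker φ.toLinearMap with hK
  have hKclosed : IsClosed (K : Set F) := ContinuousLinearMap.isClosed_ker φ
  haveI : CompleteSpace K := hKclosed.completeSpace_coe
  haveI : CompleteSpace (Kᗮ : Submodule ℝ F) := K.isClosed_orthogonal.completeSpace_coe
  -- ψ : Kᗮ →ₗ[ℝ] S
  let ψ : (Kᗮ : Submodule ℝ F) →ₗ[ℝ] S :=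
    (φ.toLinearMap.comp Kᗮ.subtype).codRestrict S
      (fun w => (hmem _).mpr ⟨w, rfl⟩)
  have hψ : ∀ w : Kᗮ, (ψ w : E) = φ (w : F) := fun w => rfl
  have hinj : Function.Injective ψ := by
    intro w₁ w₂ h
    have h0 : φ ((w₁ : F) - w₂) = 0 := by
      have := congrArg (Subtype.val : S → E) h
      rw [hψ, hψ] at this
      simp [map_sub, this]
    have hmemK : ((w₁ : F) - w₂) ∈ K := h0
    have hmemKo : ((w₁ : F) - w₂) ∈ Kᗮ := Kᗮ.sub_mem w₁.2 w₂.2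
    have : (w₁ : F) - w₂ = 0 :=
      Submodule.disjoint_def.mp K.orthogonal_disjoint _ hmemK hmemKo
    exact Subtype.ext (sub_eq_zero.mp this)
  have hsurj : Function.Surjective ψ := by
    intro u
    obtain ⟨x, hx⟩ := (hmem u).mp u.2
    obtain ⟨y, hy, z, hz, hyz⟩ := K.exists_add_mem_mem_orthogonal x
    refine ⟨⟨z, hz⟩, Subtype.ext ?_⟩
    rw [hψ]
    have : φ y = 0 := hy
    calc φ z = φ y + φ z := by rw [this, zero_add]
    _ = φ x := by rw [← map_add, ← hyz]
    _ = u := hx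
  let e : S ≃ₗ[ℝ] (Kᗮ : Submodule ℝ F) := (LinearEquiv.ofBijective ψ ⟨hinj, hsurj⟩).symm
  have hφe : ∀ u : S, φ ((e u : Kᗮ) : F) = (u : E) := by
    intro u
    have h1 := (LinearEquiv.ofBijective ψ ⟨hinj, hsurj⟩).apply_symm_apply u
    have h2 : ψ (e u) = u := h1
    have h3 := congrArg (Subtype.val : S → E) h2
    rwa [hψ] at h3
  -- inner product core on S
  let c : InnerProductSpace.Core ℝ S :=
  { inner := fun u v => inner ℝ ((e u : Kᗮ) : F) ((e v : Kᗮ) : F)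
    conj_inner_symm := fun u v => by simpa using real_inner_comm _ _
    re_inner_nonneg := fun u => by simpa using real_inner_self_nonneg (x := ((e u : Kᗮ) : F))
    definite := fun u h => by
      have h1 : ((e u : Kᗮ) : F) = 0 := inner_self_eq_zero.mp h
      have h2 : e u = 0 := Subtype.ext h1
      have := e.injective (h2.trans (map_zero e).symm)
      exact this
    add_left := fun u v w => by simp [map_add, inner_add_left]
    smul_left := fun u v r => by simp [map_smul, inner_smul_left] }
  letI n : NormedAddCommGroup S := c.toNormedAddCommGroup
  letI ip : InnerProductSpace ℝ S := InnerProductSpace.ofCore c.toCore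
  have hnorm : ∀ u : S, ‖u‖ ^ 2 = ‖((e u : Kᗮ) : F)‖ ^ 2 := by
    intro u
    rw [← real_inner_self_eq_norm_sq, ← real_inner_self_eq_norm_sq]
    rfl
  refine ⟨n, ip, ?_, ?_⟩
  · intro u
    rw [hnorm]
    have hset : {r : ℝ | ∃ (a : A) (b : B), iA a + iB b = (u : E) ∧ r = ‖a‖ ^ 2 + ‖b‖ ^ 2}
        = {r : ℝ | ∃ x : F, φ x = (u : E) ∧ r = ‖x‖ ^ 2} := by
      ext r
      constructor
      · rintro ⟨a, b, hab, rfl⟩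
        exact ⟨WithLp.toLp 2 (a, b), by rw [hφ]; exact hab, (hnormF (WithLp.toLp 2 (a, b))).symm⟩
      · rintro ⟨x, hx, rfl⟩
        exact ⟨x.fst, x.snd, by rw [← hφ]; exact hx, hnormF x⟩
    rw [hset]
    refine le_antisymm ?_ ?_
    · refine le_csInf ⟨‖((e u : Kᗮ) : F)‖ ^ 2, ⟨(e u : Kᗮ), hφe u, rfl⟩⟩ ?_
      rintro r ⟨x, hx, rfl⟩
      have hxk : x - ((e u : Kᗮ) : F) ∈ K := by
        show φ (x - _) = 0
        rw [map_sub, hx, hφe, sub_self]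
      have hiz : inner ℝ (((e u : Kᗮ) : F)) (x - ((e u : Kᗮ) : F)) = (0:ℝ) := by
        have := (e u : Kᗮ).2
        rw [Submodule.mem_orthogonal] at this
        have h := this _ hxk
        rwa [real_inner_comm] at h
      have : ‖x‖ ^ 2 = ‖((e u : Kᗮ) : F)‖ ^ 2 + ‖x - ((e u : Kᗮ) : F)‖ ^ 2 := by
        have hd : ((e u : Kᗮ) : F) + (x - ((e u : Kᗮ) : F)) = x := by abel
        calc ‖x‖ ^ 2 = ‖((e u : Kᗮ) : F) + (x - ((e u : Kᗮ) : F))‖ ^ 2 := by rw [hd]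
        _ = _ := by rw [norm_add_sq_real, hiz]; ring
      nlinarith [sq_nonneg ‖x - ((e u : Kᗮ) : F)‖]
    · refine csInf_le ⟨0, ?_⟩ ⟨(e u : Kᗮ), hφe u, rfl⟩
      rintro r ⟨x, hx, rfl⟩
      positivity
  · -- completeness
    have hni : ∀ u : S, ‖e u‖ = ‖u‖ := by
      intro u
      have h := hnorm u
      have h2 : ‖(e u : Kᗮ)‖ = ‖((e u : Kᗮ) : F)‖ := rfl
      rw [h2, ← Real.sqrt_sq (norm_nonneg u), h, Real.sqrt_sq (norm_nonneg _)]
    have hiso : Isometry (⇑e.toEquiv) :=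
      AddMonoidHomClass.isometry_of_norm e.toLinearMap hni
    exact (completeSpace_congr hiso.isUniformEmbedding).mpr ‹CompleteSpace (Kᗮ : Submodule ℝ F)›
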